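/- Suppose ψ : [0, ∞) → ℝ satisfies the inequality ψ((aλ√(1+α²) + b(1−λ)√(1+β²)) / √(1+(λα−(1−λ)β)²)) ≤ (ψ(a)λ√(1+α²) + ψ(b)(1−λ)√(1+β²)) / √(1+(λα−(1−λ)β)²) for all a, b, α, β ≥ 0 and all λ ∈ [0,1]. Then ψ is convex on [0, ∞) and subadditive: ψ(a+b) ≤ ψ(a) + ψ(b) for all a, b ≥ 0. -/
import Mathlib


theorem stmt3 (ψ : ℝ → ℝ)
    (h : ∀ a b α β lam : ℝ, 0 ≤ a → 0 ≤ b → 0 ≤ α → 0 ≤ β → lam ∈ Set.Icc (0:ℝ) 1 →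
      ψ ((a * lam * Real.sqrt (1 + α ^ 2) + b * (1 - lam) * Real.sqrt (1 + β ^ 2)) /
          Real.sqrt (1 + (lam * α - (1 - lam) * β) ^ 2)) ≤
        (ψ a * lam * Real.sqrt (1 + α ^ 2) + ψ b * (1 - lam) * Real.sqrt (1 + β ^ 2)) /
          Real.sqrt (1 + (lam * α - (1 - lam) * β) ^ 2)) :
    ConvexOn ℝ (Set.Ici (0:ℝ)) ψ ∧ ∀ a b : ℝ, 0 ≤ a → 0 ≤ b → ψ (a + b) ≤ ψ a + ψ b := by
  constructor
  · refine ⟨convex_Ici 0, ?_⟩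
    intro a ha b hb lam mu hlam hmu hsum
    have := h a b 0 0 lam ha hb le_rfl le_rfl ⟨hlam, by linarith⟩
    simp only [ne_eq, OfNat.ofNat_ne_zero, not_false_eq_true, zero_pow, add_zero,
      Real.sqrt_one, mul_one, mul_zero, sub_zero, div_one] at this
    have hmu' : mu = 1 - lam := by linarith
    subst hmu'
    have e : lam • a + (1 - lam) • b = a * lam + b * (1 - lam) := by
      simp [smul_eq_mul]; ring
    rw [e]
    refine this.trans_eq ?_
    simp [smul_eq_mul]; ring
  · intro a b ha hb
    have s3 : (0:ℝ) ≤ Real.sqrt 3 := Real.sqrt_nonneg 3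
    have := h a b (Real.sqrt 3) (Real.sqrt 3) (1/2) ha hb s3 s3
      ⟨by norm_num, by norm_num⟩
    have h4 : (1 : ℝ) + Real.sqrt 3 ^ 2 = 4 := by
      rw [Real.sq_sqrt (by norm_num : (3:ℝ) ≥ 0)]; norm_num
    rw [h4] at this
    have h2 : Real.sqrt 4 = 2 := by
      rw [show (4:ℝ) = 2^2 by norm_num, Real.sqrt_sq (by norm_num)]
    rw [h2] at this
    have hz : (1/2 : ℝ) * Real.sqrt 3 - (1 - 1/2) * Real.sqrt 3 = 0 := by ring
    rw [hz] at this
    norm_num at this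
    calc ψ (a + b) = ψ (a * (1/2) * 2 + b * (1/2) * 2) := by ring_nf
      _ ≤ ψ a * (1/2) * 2 + ψ b * (1/2) * 2 := this
      _ = ψ a + ψ b := by ring
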